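/- arXiv:2203.16938 — 4 statements merged into one kernel-verified Lean document; each statement's English description precedes it below -/
import Mathlib

section
/- For every z ∈ ℂ with |z| = 1, every θ ∈ {+1,−1}, and every ψ ∈ ℂ⁴, one has the identity (P^z_θψ)†·γ⁰·(P^z_θψ) = (i/2)·Im(θ·z·ψ†γ⁰γ²ψ*), where Im denotes the imaginary part, ψ* is the entrywise complex conjugate, and ψ† = (ψ*)ᵀ is the conjugate transpose. -/
open Matrix Complex

noncomputable section

/-- The Dirac gamma matrix `γ⁰ = [[I₂,0],[0,−I₂]]`. -/
def gamma0 : Matrix (Fin 4) (Fin 4) ℂ :=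
  !![1, 0, 0, 0; 0, 1, 0, 0; 0, 0, -1, 0; 0, 0, 0, -1]

/-- `γ² = [[0,σ²],[−σ²,0]]` with `σ² = [[0,−i],[i,0]]`. -/
def gamma2 : Matrix (Fin 4) (Fin 4) ℂ :=
  !![0, 0, 0, -I; 0, 0, I, 0; 0, I, 0, 0; -I, 0, 0, 0]

/-- Entrywise complex conjugation `ψ*` of a vector `ψ ∈ ℂ⁴`. -/
def vstar (ψ : Fin 4 → ℂ) : Fin 4 → ℂ := fun i => starRingEnd ℂ (ψ i)

/-- The charge conjugation operator `C^z_θ ψ = θ·z·γ²ψ*`. -/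
def CC (z : ℂ) (θ : ℝ) (ψ : Fin 4 → ℂ) : Fin 4 → ℂ :=
  ((θ : ℂ) * z) • gamma2.mulVec (vstar ψ)

/-- The projection `P^z_θ ψ = ½(ψ + C^z_θ ψ)`. -/
def PP (z : ℂ) (θ : ℝ) (ψ : Fin 4 → ℂ) : Fin 4 → ℂ :=
  (1 / 2 : ℂ) • (ψ + CC z θ ψ)

set_option maxHeartbeats 1000000 in
/-- For `|z| = 1`, `θ ∈ {+1,−1}`, `ψ ∈ ℂ⁴`:
`(P^z_θψ)†·γ⁰·(P^z_θψ) = (i/2)·Im(θ·z·ψ†γ⁰γ²ψ*)`. -/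
theorem proj_bilinear_form (z : ℂ) (hz : ‖z‖ = 1)
    (θ : ℝ) (hθ : θ = 1 ∨ θ = -1) (ψ : Fin 4 → ℂ) :
    vstar (PP z θ ψ) ⬝ᵥ gamma0.mulVec (PP z θ ψ) =
      (Complex.I / 2) *
        ((((θ : ℂ) * z * (vstar ψ ⬝ᵥ (gamma0 * gamma2).mulVec (vstar ψ))).im : ℝ) : ℂ) := by
  have hz' : z * starRingEnd ℂ z = 1 := by
    rw [Complex.mul_conj]; norm_cast
    simp [← Complex.sq_norm, hz]
  have him : ∀ w : ℂ, ((w.im : ℝ) : ℂ) = (w - starRingEnd ℂ w) * (-Complex.I) / 2 := by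
    intro w
    rw [Complex.sub_conj]
    push_cast
    linear_combination ((w.im : ℂ)) * Complex.I_sq
  rw [him]
  rcases hθ with h | h <;> subst h <;>
  · simp [PP, CC, vstar, gamma0, gamma2, Matrix.mulVec, dotProduct,
      Fin.sum_univ_four, Matrix.mul_apply, Matrix.vecHead, Matrix.vecTail,
      show (Fin.succ 2 : Fin 4) = 3 from rfl, map_ofNat]
    linear_combination (-(ψ 0 * starRingEnd ℂ (ψ 0) + ψ 1 * starRingEnd ℂ (ψ 1) - ψ 2 * starRingEnd ℂ (ψ 2) - ψ 3 * starRingEnd ℂ (ψ 3)) / 4) * hz' + ((ψ 0 * starRingEnd ℂ (ψ 0) + ψ 1 * starRingEnd ℂ (ψ 1) - ψ 2 * starRingEnd ℂ (ψ 2) - ψ 3 * starRingEnd ℂ (ψ 3)) * z * starRingEnd ℂ z / 4) * Complex.I_sq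
end
end

section
/- For every z ∈ ℂ with |z| = 1, every θ ∈ {+1,−1}, and every ψ ∈ ℂ⁴, the bilinear Dirac form of the charge-conjugation projection vanishes: (P^z_θψ)†·γ⁰·(P^z_θψ) = 0, where ψ† = (ψ*)ᵀ is the conjugate transpose. -/
open Matrix Complex

noncomputable section

set_option maxHeartbeats 1600000 in
/-- For `|z| = 1`, `θ ∈ {+1,−1}`, `ψ ∈ ℂ⁴`: `(P^z_θψ)†·γ⁰·(P^z_θψ) = 0`. -/
theorem proj_bilinear_form_vanishes (z : ℂ) (hz : ‖z‖ = 1)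
    (θ : ℝ) (hθ : θ = 1 ∨ θ = -1) (ψ : Fin 4 → ℂ) :
    vstar (PP z θ ψ) ⬝ᵥ gamma0.mulVec (PP z θ ψ) = 0 := by
  have hz1 : (starRingEnd ℂ) z * z = 1 := by
    rw [mul_comm, Complex.mul_conj]
    norm_cast
    simp [Complex.normSq_eq_norm_sq, hz]
  have hz0 : z ≠ 0 := by
    intro h; rw [h] at hz; simp at hz
  have hcz : (starRingEnd ℂ) z = z⁻¹ := eq_inv_of_mul_eq_one_left hz1
  rcases hθ with h | h <;> subst h <;>
    simp [vstar, PP, CC, gamma0, gamma2, Matrix.mulVec, dotProduct, Fin.sum_univ_four,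
      Matrix.vecHead, Matrix.vecTail, hcz] <;>
    field_simp <;>
    simp -failIfUnchanged only [show (Fin.succ 2 : Fin 4) = 3 from rfl] <;>
    ring_nf <;> simp only [Complex.I_sq] <;> ring
end
end

section
/- There exist constants C₂ ≥ C₁ > 0 such that for every b > 0 and every x ∈ ℝ² with b|x| ≥ 1, the two-dimensional potential satisfies C₁ · e^{−b|x|} · (b|x|)^{−1/2} ≤ V_b(x) ≤ C₂ · e^{−b|x|} · (b|x|)^{−1/2}. -/
open MeasureTheory Real

noncomputable section

/-- The two-dimensional potential `V_b(x) = ∫₀^∞ e^{−b²r − |x|²/(4r)} dr/r`. -/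
def V2d (b : ℝ) (x : EuclideanSpace ℝ (Fin 2)) : ℝ :=
  ∫ r in Set.Ioi (0 : ℝ), Real.exp (-(b ^ 2 * r) - ‖x‖ ^ 2 / (4 * r)) / r

section Aux
open Set
set_option maxHeartbeats 1000000

lemma exp_ge_sq_quarter {y : ℝ} (hy : 0 ≤ y) : y^2/4 ≤ Real.exp y := by
  have h := Real.add_one_le_exp (y/2)
  have h2 : (y/2 + 1)^2 ≤ (Real.exp (y/2))^2 :=
    pow_le_pow_left₀ (by linarith) h 2
  have h3 : (Real.exp (y/2))^2 = Real.exp y := by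
    rw [sq, ← Real.exp_add]; ring_nf
  nlinarith

lemma main_bounds (b n : ℝ) (hb : 0 < b) (hs1 : 1 ≤ b * n) :
    (Real.exp (-(1:ℝ)/2)/2) * (Real.exp (-(b*n)) * (b*n) ^ (-(1/2:ℝ))) ≤
      (∫ r in Set.Ioi (0:ℝ), Real.exp (-(b^2*r) - n^2/(4*r))/r) ∧
    (∫ r in Set.Ioi (0:ℝ), Real.exp (-(b^2*r) - n^2/(4*r))/r) ≤
      (4 + 8*Real.sqrt (2*π)) * (Real.exp (-(b*n)) * (b*n) ^ (-(1/2:ℝ))) := by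
  have hn : 0 < n := by nlinarith [hs1, hb]
  set s : ℝ := b * n with hs_def
  have hs0 : (0:ℝ) < s := lt_of_lt_of_le one_pos hs1
  set a : ℝ := b^2 with ha_def
  have ha : 0 < a := by positivity
  set m : ℝ := n / (2*b) with hm_def
  have hm : 0 < m := by positivity
  have hram : 2 * (a * m) = s := by rw [ha_def, hm_def, hs_def]; field_simp
  set ε : ℝ := s ^ (-(1/2:ℝ)) with hε_def
  have hε0 : 0 < ε := Real.rpow_pos_of_pos hs0 _
  have hε1 : ε ≤ 1 := Real.rpow_le_one_of_one_le_of_nonpos hs1 (by norm_num)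
  have hεsq : ε^2 = s⁻¹ := by
    rw [hε_def, ← Real.rpow_natCast (s ^ (-(1/2:ℝ))) 2, ← Real.rpow_mul hs0.le]
    norm_num [Real.rpow_neg_one]
  set g : ℝ → ℝ := fun r => Real.exp (-(b^2*r) - n^2/(4*r))/r with hg_def
  -- key identity
  have hkey : ∀ r ∈ Ioi (0:ℝ), g r = Real.exp (-s) * (Real.exp (-(a*(r-m)^2/r)) / r) := by
    intro r hr
    rw [Set.mem_Ioi] at hr
    rw [hg_def]
    simp only
    rw [mul_div_assoc', ← Real.exp_add]
    have : -(b^2*r) - n^2/(4*r) = -s + -(a*(r-m)^2/r) := by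
      simp only [hs_def, ha_def, hm_def]
      field_simp
      ring
    rw [this]
  have hg_nonneg : ∀ r ∈ Ioi (0:ℝ), 0 ≤ g r := by
    intro r hr; rw [Set.mem_Ioi] at hr; positivity
  have hg_cont : ContinuousOn g (Ioi 0) := by
    apply ContinuousOn.div
    · apply Real.continuous_exp.comp_continuousOn
      apply ContinuousOn.sub (by fun_prop)
      exact ContinuousOn.div continuousOn_const (by fun_prop)
        (fun r hr => by simp only [Set.mem_Ioi] at hr; positivity)
    · fun_prop
    · intro r hr; simp only [Set.mem_Ioi] at hr; positivity
  have hbnd : ∀ r ∈ Ioi (0:ℝ), ‖g r‖ ≤ (4/(n^2 * Real.exp 1)) * Real.exp (-(b^2) * r) := by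
    intro r hr
    rw [Set.mem_Ioi] at hr
    have hgr : 0 ≤ g r := hg_nonneg r hr
    rw [Real.norm_of_nonneg hgr, hg_def]
    simp only
    have hx : 0 < n^2/(4*r) := by positivity
    have he : Real.exp 1 * (n^2/(4*r)) ≤ Real.exp (n^2/(4*r)) := by
      have := Real.add_one_le_exp (n^2/(4*r) - 1)
      have h2 : Real.exp (n^2/(4*r)) = Real.exp 1 * Real.exp (n^2/(4*r) - 1) := by
        rw [← Real.exp_add]; ring_nf
      nlinarith [Real.exp_pos (1:ℝ)]
    have hsplit : Real.exp (-(b^2*r) - n^2/(4*r)) = Real.exp (-(b^2)*r) * Real.exp (-(n^2/(4*r))) := by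
      rw [← Real.exp_add]; ring_nf
    rw [hsplit]
    rw [mul_div_assoc]
    have h4 : Real.exp (-(n^2/(4*r))) / r ≤ 4/(n^2 * Real.exp 1) := by
      rw [Real.exp_neg, div_le_div_iff₀ (by positivity) (by positivity)]
      have := (inv_le_inv₀ (Real.exp_pos _) (by positivity)).mpr he
      calc (Real.exp (n^2/(4*r)))⁻¹ * (n^2 * Real.exp 1)
          ≤ (Real.exp 1 * (n^2/(4*r)))⁻¹ * (n^2 * Real.exp 1) := by
            apply mul_le_mul_of_nonneg_right this (by positivity)
        _ = 4 * r := by field_simp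
    calc Real.exp (-(b^2)*r) * (Real.exp (-(n^2/(4*r))) / r)
        ≤ Real.exp (-(b^2)*r) * (4/(n^2 * Real.exp 1)) :=
          mul_le_mul_of_nonneg_left h4 (Real.exp_pos _).le
      _ = 4/(n^2 * Real.exp 1) * Real.exp (-(b^2) * r) := by ring
  have hInt : IntegrableOn g (Ioi 0) := by
    apply Integrable.mono (((exp_neg_integrableOn_Ioi 0 (show (0:ℝ) < b^2 by positivity))).const_mul (4/(n^2 * Real.exp 1)))
    · exact hg_cont.aestronglyMeasurable measurableSet_Ioi
    · refine (ae_restrict_iff' measurableSet_Ioi).mpr (ae_of_all _ fun r hr => ?_)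
      refine (hbnd r hr).trans ?_
      rw [Real.norm_of_nonneg (by positivity)]
  constructor
  · -- lower bound
    set M : ℝ := m + m*ε with hM_def
    have hmM : m < M := by nlinarith
    have hM2m : M ≤ 2*m := by nlinarith
    have hamε : a * (m*ε)^2 / m = 1/2 := by
      have h1 : a * (m*ε)^2 / m = (a*m) * ε^2 := by field_simp
      rw [h1, hεsq, hs_def]
      rw [hs_def] at hram
      field_simp
      linarith [hram]
    have h1 : ∀ r ∈ Ioc m M, Real.exp (-s) * Real.exp (-(1:ℝ)/2) / (2*m) ≤ g r := by
      intro r hr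
      obtain ⟨hr1, hr2⟩ := hr
      have hr0 : 0 < r := hm.trans hr1
      rw [hkey r (Set.mem_Ioi.mpr hr0)]
      have hA : a*(r-m)^2/r ≤ 1/2 := by
        rw [← hamε]
        apply div_le_div₀ (by positivity) _ hm hr1.le
        apply mul_le_mul_of_nonneg_left _ ha.le
        nlinarith
      have hea : Real.exp (-(1:ℝ)/2) ≤ Real.exp (-(a*(r-m)^2/r)) := by
        apply Real.exp_le_exp.mpr; linarith
      have hdiv : Real.exp (-(1:ℝ)/2) / (2*m) ≤ Real.exp (-(a*(r-m)^2/r)) / r :=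
        div_le_div₀ (Real.exp_pos _).le hea hr0 (by linarith)
      calc Real.exp (-s) * Real.exp (-(1:ℝ)/2) / (2*m)
          = Real.exp (-s) * (Real.exp (-(1:ℝ)/2) / (2*m)) := by ring
        _ ≤ Real.exp (-s) * (Real.exp (-(a*(r-m)^2/r)) / r) :=
            mul_le_mul_of_nonneg_left hdiv (Real.exp_pos _).le
    have hIoc_int : IntegrableOn g (Ioc m M) :=
      hInt.mono_set (fun r hr => Set.mem_Ioi.mpr (hm.trans hr.1))
    have hconst_int : IntegrableOn (fun _ : ℝ => Real.exp (-s) * Real.exp (-(1:ℝ)/2) / (2*m)) (Ioc m M) := by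
      refine integrableOn_const ?_
      rw [Real.volume_Ioc]
      exact ENNReal.ofReal_ne_top
    have h2 : (Real.exp (-s) * Real.exp (-(1:ℝ)/2) / (2*m)) * (M - m) ≤ ∫ r in Ioc m M, g r := by
      have := setIntegral_mono_on hconst_int hIoc_int measurableSet_Ioc h1
      rwa [setIntegral_const, measureReal_def, Real.volume_Ioc, ENNReal.toReal_ofReal (by linarith),
        smul_eq_mul, mul_comm] at this
    have h3 : (∫ r in Ioc m M, g r) ≤ ∫ r in Ioi 0, g r := by
      apply setIntegral_mono_set hInt
      · exact (ae_restrict_iff' measurableSet_Ioi).mpr (ae_of_all _ hg_nonneg)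
      · exact HasSubset.Subset.eventuallyLE (fun r hr => Set.mem_Ioi.mpr (hm.trans hr.1))
    have heq : (Real.exp (-s) * Real.exp (-(1:ℝ)/2) / (2*m)) * (M - m)
        = (Real.exp (-(1:ℝ)/2)/2) * (Real.exp (-s) * ε) := by
      rw [hM_def]
      field_simp
      ring
    linarith [h2, h3, heq ▸ h2]
  · -- upper bound
    have hεs : (1:ℝ)/s ≤ ε := by
      rw [one_div, ← hεsq]
      nlinarith
    -- split the integral
    have hm4 : (0:ℝ) < m/4 := by positivity
    have hm44 : m/4 ≤ 4*m := by linarith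
    have hi1 : IntegrableOn g (Ioc 0 (m/4)) :=
      hInt.mono_set (fun r hr => Set.mem_Ioi.mpr hr.1)
    have hi2 : IntegrableOn g (Ioc (m/4) (4*m)) :=
      hInt.mono_set (fun r hr => Set.mem_Ioi.mpr (hm4.trans hr.1))
    have hi3 : IntegrableOn g (Ioi (4*m)) :=
      hInt.mono_set (fun r hr => Set.mem_Ioi.mpr (by have := Set.mem_Ioi.mp hr; linarith))
    have hsplit : (∫ r in Ioi (0:ℝ), g r)
        = (∫ r in Ioc 0 (m/4), g r) + ((∫ r in Ioc (m/4) (4*m), g r) + (∫ r in Ioi (4*m), g r)) := by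
      have e1 : Ioc (m/4) (4*m) ∪ Ioi (4*m) = Ioi (m/4) := Set.Ioc_union_Ioi_eq_Ioi hm44
      have e2 : Ioc (0:ℝ) (m/4) ∪ Ioi (m/4) = Ioi 0 := Set.Ioc_union_Ioi_eq_Ioi hm4.le
      rw [← setIntegral_union (Set.Ioc_disjoint_Ioi le_rfl) measurableSet_Ioi hi2 hi3, e1,
        ← setIntegral_union (Set.Ioc_disjoint_Ioi le_rfl) measurableSet_Ioi hi1 (hInt.mono_set (fun r hr => Set.mem_Ioi.mpr (hm4.trans (Set.mem_Ioi.mp hr)))), e2]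
    -- piece 1
    have hams : a*m = s/2 := by linarith
    have hpiece1 : (∫ r in Ioc (0:ℝ) (m/4), g r) ≤ 2 * Real.exp (-s) * ε := by
      set q : ℝ := a*m^2/2 with hq_def
      have hq : 0 < q := by positivity
      have hb1 : ∀ r ∈ Ioc (0:ℝ) (m/4), g r ≤ (Real.exp (-s) * (4/q^2)) * r := by
        intro r hr
        obtain ⟨hr0, hr1⟩ := hr
        rw [hkey r (Set.mem_Ioi.mpr hr0)]
        have h1 : q/r ≤ a*(r-m)^2/r := by
          apply (div_le_div_iff_of_pos_right hr0).mpr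
          rw [hq_def]
          have h0 : m^2/2 ≤ (r-m)^2 := by nlinarith
          nlinarith [mul_le_mul_of_nonneg_left h0 ha.le]
        have h2 : Real.exp (-(a*(r-m)^2/r)) ≤ Real.exp (-(q/r)) :=
          Real.exp_le_exp.mpr (by linarith)
        have h3 : Real.exp (-(q/r)) ≤ 4*r^2/q^2 := by
          rw [Real.exp_neg]
          have h4 := exp_ge_sq_quarter (show 0 ≤ q/r by positivity)
          have h5 : (0:ℝ) < (q/r)^2/4 := by positivity
          calc (Real.exp (q/r))⁻¹ ≤ ((q/r)^2/4)⁻¹ := (inv_le_inv₀ (Real.exp_pos _) h5).mpr h4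
            _ = 4*r^2/q^2 := by field_simp
        calc Real.exp (-s) * (Real.exp (-(a*(r-m)^2/r)) / r)
            ≤ Real.exp (-s) * ((4*r^2/q^2) / r) := by
              apply mul_le_mul_of_nonneg_left _ (Real.exp_pos _).le
              exact (div_le_div_iff_of_pos_right hr0).mpr (h2.trans h3)
          _ = (Real.exp (-s) * (4/q^2)) * r := by field_simp
      have hlin_int : IntegrableOn (fun r : ℝ => (Real.exp (-s) * (4/q^2)) * r) (Ioc 0 (m/4)) := by
        apply Continuous.integrableOn_Ioc
        fun_prop
      have hmono := setIntegral_mono_on hi1 hlin_int measurableSet_Ioc hb1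
      have hval : (∫ r in Ioc (0:ℝ) (m/4), (Real.exp (-s) * (4/q^2)) * r)
          = (Real.exp (-s) * (4/q^2)) * ((m/4)^2/2) := by
        rw [← intervalIntegral.integral_of_le hm4.le, intervalIntegral.integral_const_mul,
          integral_id]
        norm_num
      have hcomp : (4/q^2) * ((m/4)^2/2) = 2/s^2 := by
        rw [hq_def, ← hram]
        field_simp
        ring
      have h7 : 2/s^2 ≤ 2*ε := by
        have h8 : 1/s^2 ≤ 1/s := one_div_le_one_div_of_le hs0 (by nlinarith)
        have : 2/s^2 = 2*(1/s^2) := by ring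
        linarith [hεs]
      calc (∫ r in Ioc (0:ℝ) (m/4), g r) ≤ (Real.exp (-s) * (4/q^2)) * ((m/4)^2/2) :=
            hval ▸ hmono
        _ = Real.exp (-s) * ((4/q^2) * ((m/4)^2/2)) := by ring
        _ = Real.exp (-s) * (2/s^2) := by rw [hcomp]
        _ ≤ Real.exp (-s) * (2*ε) := mul_le_mul_of_nonneg_left h7 (Real.exp_pos _).le
        _ = 2 * Real.exp (-s) * ε := by ring
    -- piece 2
    have hpiece2 : (∫ r in Ioc (m/4) (4*m), g r) ≤ 8 * Real.sqrt (2*π) * Real.exp (-s) * ε := by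
      set β : ℝ := a/(4*m) with hβ_def
      have hβ : 0 < β := by positivity
      have hb2 : ∀ r ∈ Ioc (m/4) (4*m), g r ≤ (Real.exp (-s) * (4/m)) * Real.exp (-(β*(r-m)^2)) := by
        intro r hr
        obtain ⟨hr1, hr2⟩ := hr
        have hr0 : 0 < r := hm4.trans hr1
        rw [hkey r (Set.mem_Ioi.mpr hr0)]
        have h1 : β*(r-m)^2 ≤ a*(r-m)^2/r := by
          have he : β*(r-m)^2 = (a*(r-m)^2)/(4*m) := by rw [hβ_def]; ring
          rw [he]
          apply div_le_div_of_nonneg_left (by positivity) hr0 hr2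
        have h2 : Real.exp (-(a*(r-m)^2/r)) ≤ Real.exp (-(β*(r-m)^2)) :=
          Real.exp_le_exp.mpr (by linarith)
        calc Real.exp (-s) * (Real.exp (-(a*(r-m)^2/r)) / r)
            ≤ Real.exp (-s) * (Real.exp (-(β*(r-m)^2)) / (m/4)) := by
              apply mul_le_mul_of_nonneg_left _ (Real.exp_pos _).le
              exact div_le_div₀ (Real.exp_pos _).le h2 hm4 hr1.le
          _ = (Real.exp (-s) * (4/m)) * Real.exp (-(β*(r-m)^2)) := by
              field_simp
      have hgauss_int : Integrable (fun r : ℝ => Real.exp (-β*(r-m)^2)) :=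
        (integrable_exp_neg_mul_sq hβ).comp_sub_right m
      have hgauss_int' : Integrable (fun r : ℝ => Real.exp (-(β*(r-m)^2))) := by
        simpa [neg_mul] using hgauss_int
      have hint2 : IntegrableOn (fun r : ℝ => (Real.exp (-s) * (4/m)) * Real.exp (-(β*(r-m)^2)))
          (Ioc (m/4) (4*m)) := (hgauss_int'.const_mul _).integrableOn
      have hmono := setIntegral_mono_on hi2 hint2 measurableSet_Ioc hb2
      have hle : (∫ r in Ioc (m/4) (4*m), (Real.exp (-s) * (4/m)) * Real.exp (-(β*(r-m)^2)))
          ≤ (Real.exp (-s) * (4/m)) * Real.sqrt (π/β) := by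
        rw [MeasureTheory.integral_const_mul]
        apply mul_le_mul_of_nonneg_left _ (by positivity)
        have h9 : (∫ r in Ioc (m/4) (4*m), Real.exp (-(β*(r-m)^2)))
            ≤ ∫ r : ℝ, Real.exp (-(β*(r-m)^2)) :=
          setIntegral_le_integral hgauss_int' (Filter.Eventually.of_forall fun r => (Real.exp_pos _).le)
        have h10 : (∫ r : ℝ, Real.exp (-(β*(r-m)^2))) = Real.sqrt (π/β) := by
          simp_rw [← neg_mul]
          rw [integral_sub_right_eq_self (fun r => Real.exp (-β*r^2)) m]
          exact integral_gaussian β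
        linarith
      have hsqrt : Real.sqrt (π/β) = Real.sqrt (2*π) * (2*m*ε) := by
        have hε2' : ε^2 = (2*(a*m))⁻¹ := by rw [hεsq, ← hram]
        have h12 : (2*m*ε)^2 = 2*m/a := by
          have he : (2*m*ε)^2 = 4*m^2*ε^2 := by ring
          rw [he, hε2']
          field_simp
          ring
        have h11 : π/β = (2*π) * (2*m*ε)^2 := by
          rw [h12, hβ_def]
          field_simp
          ring
        rw [h11, Real.sqrt_mul (by positivity), Real.sqrt_sq (by positivity)]
      calc (∫ r in Ioc (m/4) (4*m), g r)
          ≤ (Real.exp (-s) * (4/m)) * Real.sqrt (π/β) := hmono.trans hle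
        _ = (Real.exp (-s) * (4/m)) * (Real.sqrt (2*π) * (2*m*ε)) := by rw [hsqrt]
        _ = 8 * Real.sqrt (2*π) * Real.exp (-s) * ε := by field_simp; ring
    -- piece 3
    have hpiece3 : (∫ r in Ioi (4*m), g r) ≤ 2 * Real.exp (-s) * ε := by
      have hb3 : ∀ r ∈ Ioi (4*m), g r
          ≤ (Real.exp (-s) * Real.exp (-(a*m)) / (4*m)) * Real.exp (-(a/4) * r) := by
        intro r hr
        have hr4 : 4*m < r := Set.mem_Ioi.mp hr
        have hr0 : 0 < r := by linarith
        rw [hkey r (Set.mem_Ioi.mpr hr0)]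
        have h0 : r^2/2 ≤ (r-m)^2 := by nlinarith
        have h1 : (a/2)*r ≤ a*(r-m)^2/r := by
          have he : (a/2)*r = a*(r^2/2)/r := by field_simp
          rw [he]
          apply (div_le_div_iff_of_pos_right hr0).mpr
          nlinarith [mul_le_mul_of_nonneg_left h0 ha.le]
        have h2 : Real.exp (-(a*(r-m)^2/r)) ≤ Real.exp (-((a/2)*r)) :=
          Real.exp_le_exp.mpr (by linarith)
        have h3 : Real.exp (-((a/2)*r)) = Real.exp (-(a/4)*r) * Real.exp (-(a/4)*r) := by
          rw [← Real.exp_add]; ring_nf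
        have h4 : Real.exp (-(a/4)*r) ≤ Real.exp (-(a*m)) :=
          Real.exp_le_exp.mpr (by nlinarith)
        have h5 : Real.exp (-((a/2)*r)) ≤ Real.exp (-(a*m)) * Real.exp (-(a/4)*r) := by
          rw [h3]
          exact mul_le_mul_of_nonneg_right h4 (Real.exp_pos _).le
        calc Real.exp (-s) * (Real.exp (-(a*(r-m)^2/r)) / r)
            ≤ Real.exp (-s) * ((Real.exp (-(a*m)) * Real.exp (-(a/4)*r)) / (4*m)) := by
              apply mul_le_mul_of_nonneg_left _ (Real.exp_pos _).le
              exact div_le_div₀ (by positivity) (h2.trans h5) (by positivity) hr4.le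
          _ = (Real.exp (-s) * Real.exp (-(a*m)) / (4*m)) * Real.exp (-(a/4) * r) := by
              ring
      have hexp_int : IntegrableOn (fun r : ℝ => Real.exp (-(a/4) * r)) (Ioi (4*m)) :=
        exp_neg_integrableOn_Ioi _ (by positivity)
      have hint3 : IntegrableOn
          (fun r : ℝ => (Real.exp (-s) * Real.exp (-(a*m)) / (4*m)) * Real.exp (-(a/4) * r))
          (Ioi (4*m)) := hexp_int.const_mul _
      have hmono := setIntegral_mono_on hi3 hint3 measurableSet_Ioi hb3
      have hval : (∫ r in Ioi (4*m), Real.exp (-(a/4)*r)) ≤ 4/a := by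
        have h13 : (∫ r in Ioi (4*m), Real.exp (-(a/4)*r))
            ≤ ∫ r in Ioi (0:ℝ), Real.exp (-(a/4)*r) := by
          apply setIntegral_mono_set (exp_neg_integrableOn_Ioi 0 (by positivity))
          · exact Filter.Eventually.of_forall fun r => (Real.exp_pos _).le
          · exact HasSubset.Subset.eventuallyLE (Set.Ioi_subset_Ioi (by positivity))
        have h15 := integral_comp_mul_left_Ioi (fun y => Real.exp (-y)) 0 (show (0:ℝ) < a/4 by positivity)
        simp only [mul_zero, integral_exp_neg_Ioi, smul_eq_mul, neg_zero, Real.exp_zero,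
          mul_one] at h15
        have h16 : (∫ r in Ioi (0:ℝ), Real.exp (-(a/4)*r)) = (a/4)⁻¹ := by
          rw [show (fun r:ℝ => Real.exp (-(a/4)*r)) = fun r:ℝ => Real.exp (-(a/4*r)) by
            funext r; ring_nf]
          exact h15
        rw [h16] at h13
        rw [inv_div] at h13
        exact h13
      have hexp1 : Real.exp (-(a*m)) ≤ 1 := by
        rw [← Real.exp_zero]
        exact Real.exp_le_exp.mpr (by nlinarith)
      have hc0 : (0:ℝ) ≤ Real.exp (-s) * Real.exp (-(a*m)) / (4*m) := by positivity
      calc (∫ r in Ioi (4*m), g r)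
          ≤ ∫ r in Ioi (4*m), (Real.exp (-s) * Real.exp (-(a*m)) / (4*m)) * Real.exp (-(a/4) * r) :=
            hmono
        _ = (Real.exp (-s) * Real.exp (-(a*m)) / (4*m)) * ∫ r in Ioi (4*m), Real.exp (-(a/4) * r) := by
            rw [MeasureTheory.integral_const_mul]
        _ ≤ (Real.exp (-s) * Real.exp (-(a*m)) / (4*m)) * (4/a) :=
            mul_le_mul_of_nonneg_left hval hc0
        _ = Real.exp (-s) * Real.exp (-(a*m)) * (1/(a*m)) := by field_simp
        _ ≤ Real.exp (-s) * 1 * (1/(a*m)) := by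
            apply mul_le_mul_of_nonneg_right _ (by positivity)
            exact mul_le_mul_of_nonneg_left hexp1 (Real.exp_pos _).le
        _ = Real.exp (-s) * (2/s) := by
            rw [← hram]; ring
        _ ≤ Real.exp (-s) * (2*ε) := by
            apply mul_le_mul_of_nonneg_left _ (Real.exp_pos _).le
            have : 2/s = 2*(1/s) := by ring
            linarith [hεs]
        _ = 2 * Real.exp (-s) * ε := by ring
    rw [hsplit]
    nlinarith [hpiece1, hpiece2, hpiece3, Real.exp_pos (-s), hε0, Real.sqrt_nonneg (2*π)]
end Aux

/-- There exist `C₂ ≥ C₁ > 0` such that for every `b > 0` and `x ∈ ℝ²` with `b|x| ≥ 1`,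
`C₁ e^{−b|x|} (b|x|)^{−1/2} ≤ V_b(x) ≤ C₂ e^{−b|x|} (b|x|)^{−1/2}`. -/
theorem V2d_far_field_bounds :
    ∃ C₁ C₂ : ℝ, 0 < C₁ ∧ C₁ ≤ C₂ ∧
      ∀ (b : ℝ), 0 < b → ∀ x : EuclideanSpace ℝ (Fin 2), 1 ≤ b * ‖x‖ →
        C₁ * (Real.exp (-(b * ‖x‖)) * (b * ‖x‖) ^ (-(1 / 2 : ℝ))) ≤ V2d b x ∧
        V2d b x ≤ C₂ * (Real.exp (-(b * ‖x‖)) * (b * ‖x‖) ^ (-(1 / 2 : ℝ))) := by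
  refine ⟨Real.exp (-(1:ℝ)/2)/2, 4 + 8*Real.sqrt (2*π), by positivity, ?_, ?_⟩
  · have h : Real.exp (-(1:ℝ)/2) ≤ 1 := by
      rw [← Real.exp_zero]
      exact Real.exp_le_exp.mpr (by norm_num)
    nlinarith [Real.sqrt_nonneg (2*π)]
  · intro b hb x hx
    have h := main_bounds b ‖x‖ hb hx
    exact ⟨h.1, h.2⟩

end
end

section
/- There exist constants C₂ ≥ C₁ > 0 such that for every b > 0 and every x ∈ ℝ² with 0 < b|x| ≤ 1/2, the two-dimensional potential satisfies C₁ · log(1/(b|x|)) ≤ V_b(x) ≤ C₂ · log(1/(b|x|)); that is, V_b(x) is comparable to −log(b|x|) in this region. -/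
open MeasureTheory Real Set

noncomputable section

-- basic pointwise bounds
lemma exp_neg_le_inv {y : ℝ} (hy : 0 < y) : Real.exp (-y) ≤ 1 / y := by
  rw [Real.exp_neg, one_div]
  exact inv_anti₀ hy (le_trans (by linarith) (Real.add_one_le_exp y))

lemma integrable_core (b d : ℝ) (hb : 0 < b) (hd : 0 < d) :
    IntegrableOn (fun r : ℝ => Real.exp (-(b^2*r) - d^2/(4*r)) / r) (Ioi 0) := by
  have hmeas : AEStronglyMeasurable (fun r : ℝ => Real.exp (-(b^2*r) - d^2/(4*r)) / r)
      (volume.restrict (Ioi 0)) := by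
    apply ContinuousOn.aestronglyMeasurable _ measurableSet_Ioi
    apply ContinuousOn.div
    · apply Continuous.comp_continuousOn Real.continuous_exp
      apply ContinuousOn.sub (Continuous.continuousOn (by continuity))
      exact ContinuousOn.div continuousOn_const (continuous_const.mul continuous_id).continuousOn
        (fun r hr => by simp at hr; positivity)
    · exact continuousOn_id
    · exact fun r hr => by simp at hr; positivity
  have hint : IntegrableOn (fun r : ℝ => (4/d^2) * Real.exp (-(b^2) * r)) (Ioi 0) :=
    (exp_neg_integrableOn_Ioi 0 (by positivity)).const_mul _
  refine hint.mono' hmeas ?_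
  filter_upwards [ae_restrict_mem measurableSet_Ioi] with r hr
  have hr0 : 0 < r := hr
  have h1 : Real.exp (-(d^2/(4*r))) ≤ 4*r/d^2 := by
    calc Real.exp (-(d^2/(4*r))) ≤ 1/(d^2/(4*r)) := exp_neg_le_inv (by positivity)
    _ = 4*r/d^2 := by field_simp
  have hpos : (0:ℝ) < Real.exp (-(b^2*r) - d^2/(4*r)) / r := by positivity
  rw [Real.norm_of_nonneg hpos.le]
  have : Real.exp (-(b^2*r) - d^2/(4*r)) = Real.exp (-(b^2*r)) * Real.exp (-(d^2/(4*r))) := by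
    rw [← Real.exp_add]; ring_nf
  rw [this]
  rw [div_le_iff₀ hr0]
  calc Real.exp (-(b^2*r)) * Real.exp (-(d^2/(4*r)))
      ≤ Real.exp (-(b^2*r)) * (4*r/d^2) := by
        exact mul_le_mul_of_nonneg_left h1 (Real.exp_pos _).le
    _ = 4/d^2 * Real.exp (-(b^2) * r) * r := by rw [neg_mul]; ring

lemma integral_exp_sq_Ioi (b c : ℝ) (hb : 0 < b) :
    ∫ r in Ioi c, Real.exp (-(b^2) * r) = (b^2)⁻¹ * Real.exp (-(b^2) * c) := by
  have hb2 : (0:ℝ) < b^2 := by positivity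
  have hderiv : ∀ x ∈ Ici c, HasDerivAt (fun r => -(b^2)⁻¹ * Real.exp (-(b^2) * r))
      (Real.exp (-(b^2) * x)) x := by
    intro x _
    have h := (Real.hasDerivAt_exp (-(b^2) * x)).comp x ((hasDerivAt_id x).const_mul (-(b^2)))
    have h2 := h.const_mul (-(b^2)⁻¹)
    convert h2 using 1
    · rfl
    · rfl
    · rfl
    · field_simp
  have htend : Filter.Tendsto (fun r => -(b^2)⁻¹ * Real.exp (-(b^2) * r)) Filter.atTop (nhds 0) := by
    have : Filter.Tendsto (fun r : ℝ => Real.exp (-(b^2) * r)) Filter.atTop (nhds 0) := by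
      apply Real.tendsto_exp_atBot.comp
      exact Filter.Tendsto.const_mul_atTop_of_neg (by linarith) Filter.tendsto_id
    simpa using this.const_mul (-(b^2)⁻¹)
  have := integral_Ioi_of_hasDerivAt_of_tendsto' hderiv
    (exp_neg_integrableOn_Ioi c hb2) htend
  rw [this]; ring

lemma core_bounds (b d : ℝ) (hb : 0 < b) (hd : 0 < d) (hbd : b * d ≤ 1/2) :
    Real.exp (-2) * Real.log (1/(b*d)) ≤
      (∫ r in Ioi (0:ℝ), Real.exp (-(b^2*r) - d^2/(4*r)) / r) ∧
    (∫ r in Ioi (0:ℝ), Real.exp (-(b^2*r) - d^2/(4*r)) / r) ≤ 10 * Real.log (1/(b*d)) := by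
  set f : ℝ → ℝ := fun r => Real.exp (-(b^2*r) - d^2/(4*r)) / r with hf
  have hbd0 : 0 < b * d := by positivity
  have hbd1 : b * d ≤ 1 := by linarith
  have hL2 : Real.log 2 ≤ Real.log (1/(b*d)) := by
    apply Real.log_le_log (by norm_num)
    rw [le_div_iff₀ hbd0]; linarith
  have hL0 : 0 < Real.log (1/(b*d)) := lt_of_lt_of_le (Real.log_pos (by norm_num)) hL2
  have hint := integrable_core b d hb hd
  have hdb : d / b ≤ 1 / b^2 := by
    rw [div_le_div_iff₀ hb (by positivity)]
    nlinarith [mul_le_mul_of_nonneg_right hbd1 hb.le]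
  have hdb0 : (0:ℝ) < d / b := by positivity
  constructor
  · -- lower bound
    have hsub : Ioc (d/b) (1/b^2) ⊆ Ioi (0:ℝ) := fun r hr => lt_trans hdb0 hr.1
    have hint2 : IntegrableOn f (Ioc (d/b) (1/b^2)) := hint.mono_set hsub
    have hg_int : IntegrableOn (fun r : ℝ => Real.exp (-2) * (1/r)) (Ioc (d/b) (1/b^2)) := by
      apply (ContinuousOn.integrableOn_Icc ?_).mono_set Ioc_subset_Icc_self
      apply ContinuousOn.mul continuousOn_const
      apply ContinuousOn.div continuousOn_const continuousOn_id
      exact fun r hr => ne_of_gt (lt_of_lt_of_le hdb0 hr.1)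
    have hptwise : ∀ r ∈ Ioc (d/b) (1/b^2), Real.exp (-2) * (1/r) ≤ f r := by
      intro r hr
      have hr0 : 0 < r := lt_trans hdb0 hr.1
      have h1 : b^2 * r ≤ 1 := by
        have := hr.2
        rw [le_div_iff₀ (by positivity : (0:ℝ) < b^2)] at this
        linarith [this]
      have h2 : d^2/(4*r) ≤ 1 := by
        have hrd : d/b ≤ r := hr.1.le
        have : d^2/(4*r) ≤ d^2/(4*(d/b)) := by
          apply div_le_div_of_nonneg_left (by positivity) (by positivity)
          linarith
        have heq : d^2/(4*(d/b)) = b*d/4 := by field_simp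
        rw [heq] at this
        linarith
      have hexp : Real.exp (-2) ≤ Real.exp (-(b^2*r) - d^2/(4*r)) := by
        apply Real.exp_le_exp.mpr
        linarith
      calc Real.exp (-2) * (1/r) = Real.exp (-2) / r := by ring
      _ ≤ Real.exp (-(b^2*r) - d^2/(4*r)) / r := by
        apply div_le_div_of_nonneg_right hexp hr0.le |>.trans_eq rfl
    have hmono := setIntegral_mono_on hg_int hint2 measurableSet_Ioc hptwise
    have hcalc : (∫ r in Ioc (d/b) (1/b^2), Real.exp (-2) * (1/r))
        = Real.exp (-2) * Real.log (1/(b*d)) := by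
      rw [MeasureTheory.integral_const_mul]
      congr 1
      rw [← intervalIntegral.integral_of_le hdb, integral_one_div
        (Set.notMem_uIcc_of_lt hdb0 (by positivity))]
      congr 1
      field_simp
    rw [hcalc] at hmono
    refine hmono.trans (setIntegral_mono_set hint ?_ hsub.eventuallyLE)
    filter_upwards [ae_restrict_mem measurableSet_Ioi] with r hr
    have : (0:ℝ) < r := hr
    positivity
  · -- upper bound
    have hb2 : (0:ℝ) < b^2 := by positivity
    have hB : (0:ℝ) < 1/b^2 := by positivity
    have hA : (0:ℝ) < d^2 := by positivity
    have hAB : d^2 ≤ 1/b^2 := by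
      rw [le_div_iff₀ hb2]
      nlinarith
    have hi1 : IntegrableOn f (Ioc 0 (d^2)) := hint.mono_set Ioc_subset_Ioi_self
    have hi2 : IntegrableOn f (Ioc (d^2) (1/b^2)) := hint.mono_set (fun r hr => lt_trans hA hr.1)
    have hi3 : IntegrableOn f (Ioi (1/b^2)) := hint.mono_set (fun r hr => lt_trans hB hr)
    have hi12 : IntegrableOn f (Ioc 0 (1/b^2)) := hint.mono_set Ioc_subset_Ioi_self
    have split1 : (∫ r in Ioi (0:ℝ), f r)
        = (∫ r in Ioc (0:ℝ) (1/b^2), f r) + ∫ r in Ioi (1/b^2), f r := by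
      rw [← setIntegral_union (Set.Ioc_disjoint_Ioi le_rfl) measurableSet_Ioi hi12 hi3,
        Set.Ioc_union_Ioi_eq_Ioi hB.le]
    have split2 : (∫ r in Ioc (0:ℝ) (1/b^2), f r)
        = (∫ r in Ioc (0:ℝ) (d^2), f r) + ∫ r in Ioc (d^2) (1/b^2), f r := by
      rw [← setIntegral_union (Set.Ioc_disjoint_Ioc_of_le le_rfl) measurableSet_Ioc hi1 hi2,
        Set.Ioc_union_Ioc_eq_Ioc hA.le hAB]
    have h1 : (∫ r in Ioc (0:ℝ) (d^2), f r) ≤ 4 := by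
      have hbound : ∀ r ∈ Ioc (0:ℝ) (d^2), ‖f r‖ ≤ 4/d^2 := by
        intro r hr
        have hr0 : 0 < r := hr.1
        have hfr : (0:ℝ) ≤ f r := by simp only [hf]; positivity
        rw [Real.norm_of_nonneg hfr]
        have heq : Real.exp (-(b^2*r) - d^2/(4*r))
            = Real.exp (-(b^2*r)) * Real.exp (-(d^2/(4*r))) := by
          rw [← Real.exp_add]; ring_nf
        have hle1 : Real.exp (-(b^2*r)) ≤ 1 := Real.exp_le_one_iff.mpr (by nlinarith)
        have hle2 : Real.exp (-(d^2/(4*r))) ≤ 4*r/d^2 := by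
          calc Real.exp (-(d^2/(4*r))) ≤ 1/(d^2/(4*r)) := exp_neg_le_inv (by positivity)
          _ = 4*r/d^2 := by field_simp
        simp only [hf]
        rw [div_le_iff₀ hr0, heq]
        calc Real.exp (-(b^2*r)) * Real.exp (-(d^2/(4*r)))
            ≤ 1 * (4*r/d^2) := mul_le_mul hle1 hle2 (Real.exp_pos _).le one_pos.le
        _ = 4/d^2 * r := by ring
      have hnorm := norm_setIntegral_le_of_norm_le_const (by
          rw [Real.volume_Ioc]; exact ENNReal.ofReal_lt_top) hbound
      calc (∫ r in Ioc (0:ℝ) (d^2), f r) ≤ ‖∫ r in Ioc (0:ℝ) (d^2), f r‖ := le_abs_self _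
      _ ≤ 4/d^2 * (volume (Ioc (0:ℝ) (d^2))).toReal := hnorm
      _ = 4 := by
          rw [Real.volume_Ioc, ENNReal.toReal_ofReal (by rw [sub_zero]; positivity)]
          field_simp
          ring
    have h2 : (∫ r in Ioc (d^2) (1/b^2), f r) ≤ 2 * Real.log (1/(b*d)) := by
      have hg_int : IntegrableOn (fun r : ℝ => 1/r) (Ioc (d^2) (1/b^2)) := by
        apply (ContinuousOn.integrableOn_Icc ?_).mono_set Ioc_subset_Icc_self
        apply ContinuousOn.div continuousOn_const continuousOn_id
        exact fun r hr => ne_of_gt (lt_of_lt_of_le hA hr.1)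
      have hptwise : ∀ r ∈ Ioc (d^2) (1/b^2), f r ≤ 1/r := by
        intro r hr
        have hr0 : 0 < r := lt_trans hA hr.1
        simp only [hf]
        apply div_le_div_of_nonneg_right _ hr0.le |>.trans_eq rfl
        calc Real.exp (-(b^2*r) - d^2/(4*r)) ≤ 1 :=
          Real.exp_le_one_iff.mpr (by nlinarith [div_nonneg (sq_nonneg d) (by linarith : (0:ℝ) ≤ 4*r)])
        _ = 1 := rfl
      have hmono := setIntegral_mono_on hi2 hg_int measurableSet_Ioc hptwise
      refine hmono.trans ?_
      rw [← intervalIntegral.integral_of_le hAB, integral_one_div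
        (Set.notMem_uIcc_of_lt hA (by positivity))]
      have heq : (1/b^2)/d^2 = (1/(b*d))^2 := by
        field_simp
      rw [heq, Real.log_pow]
      norm_num
    have h3 : (∫ r in Ioi (1/b^2 : ℝ), f r) ≤ 1 := by
      have hg_int : IntegrableOn (fun r : ℝ => b^2 * Real.exp (-(b^2) * r)) (Ioi (1/b^2)) :=
        (exp_neg_integrableOn_Ioi _ hb2).const_mul _
      have hptwise : ∀ r ∈ Ioi (1/b^2 : ℝ), f r ≤ b^2 * Real.exp (-(b^2) * r) := by
        intro r hr
        have hrB : 1/b^2 < r := hr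
        have hr0 : 0 < r := lt_trans hB hrB
        have hinv : 1/r ≤ b^2 := by
          rw [div_le_iff₀ hr0]
          rw [div_lt_iff₀ hb2] at hrB
          linarith
        have hexp : Real.exp (-(b^2*r) - d^2/(4*r)) ≤ Real.exp (-(b^2)*r) := by
          apply Real.exp_le_exp.mpr
          have : (0:ℝ) ≤ d^2/(4*r) := by positivity
          rw [neg_mul]
          linarith
        simp only [hf]
        calc Real.exp (-(b^2*r) - d^2/(4*r)) / r ≤ Real.exp (-(b^2)*r) / r :=
          div_le_div_of_nonneg_right hexp hr0.le |>.trans_eq rfl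
        _ = Real.exp (-(b^2)*r) * (1/r) := by ring
        _ ≤ Real.exp (-(b^2)*r) * b^2 := mul_le_mul_of_nonneg_left hinv (Real.exp_pos _).le
        _ = b^2 * Real.exp (-(b^2)*r) := by ring
      have hmono := setIntegral_mono_on hi3 hg_int measurableSet_Ioi hptwise
      refine hmono.trans ?_
      rw [MeasureTheory.integral_const_mul, integral_exp_sq_Ioi b _ hb]
      have : -(b^2) * (1/b^2) = -1 := by field_simp
      rw [this]
      calc b^2 * ((b^2)⁻¹ * Real.exp (-1)) = Real.exp (-1) := by field_simp
      _ ≤ 1 := Real.exp_le_one_iff.mpr (by norm_num)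
    have hlog2 : (0.6931471803 : ℝ) < Real.log 2 := Real.log_two_gt_d9
    calc (∫ r in Ioi (0:ℝ), f r)
        = (∫ r in Ioc (0:ℝ) (d^2), f r) + (∫ r in Ioc (d^2) (1/b^2), f r)
          + ∫ r in Ioi (1/b^2 : ℝ), f r := by rw [split1, split2]
    _ ≤ 4 + 2 * Real.log (1/(b*d)) + 1 := by linarith
    _ ≤ 10 * Real.log (1/(b*d)) := by nlinarith


/-- There exist `C₂ ≥ C₁ > 0` such that for every `b > 0` and `x ∈ ℝ²` with
`0 < b|x| ≤ 1/2`, `C₁ log(1/(b|x|)) ≤ V_b(x) ≤ C₂ log(1/(b|x|))`. -/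
theorem V2d_near_field_bounds :
    ∃ C₁ C₂ : ℝ, 0 < C₁ ∧ C₁ ≤ C₂ ∧
      ∀ (b : ℝ), 0 < b → ∀ x : EuclideanSpace ℝ (Fin 2),
        0 < b * ‖x‖ → b * ‖x‖ ≤ 1 / 2 →
          C₁ * Real.log (1 / (b * ‖x‖)) ≤ V2d b x ∧
          V2d b x ≤ C₂ * Real.log (1 / (b * ‖x‖)) := by
  refine ⟨Real.exp (-2), 10, Real.exp_pos _, ?_, ?_⟩
  · have : Real.exp (-2) ≤ 1 := Real.exp_le_one_iff.mpr (by norm_num)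
    linarith
  · intro b hb x hx1 hx2
    have hd : 0 < ‖x‖ := by nlinarith [norm_nonneg x]
    exact core_bounds b ‖x‖ hb hd hx2
end
end
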